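/- Gap bound at a maximizer of a shifted parameter (used in the convergence proof): Let f : ℝ^d × Δ^L → ℝ be such that for every θ the map π ↦ f(θ, π) is concave and differentiable on a neighborhood of Δ^L, and for every π the map θ ↦ f(θ, π) is l-Lipschitz. For each θ let π*(θ) be a maximizer of f(θ, ·) over Δ^L. Then for all θ_k, θ_s ∈ ℝ^d and all π_k ∈ Δ^L: ⟨∇_π f(θ_k, π_k), π*(θ_s) − π_k⟩ ≥ f(θ_k, π*(θ_k)) − f(θ_k, π_k) − 2l‖θ_s − θ_k‖. -/

import Mathlib

open scoped BigOperators RealInnerProductSpace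

noncomputable section


lemma concave_grad_ineq {E : Type*} [NormedAddCommGroup E] [InnerProductSpace ℝ E] [CompleteSpace E]
    {s : Set E} {g : E → ℝ} (hc : ConcaveOn ℝ s g) {x y : E} (hx : x ∈ s) (hy : y ∈ s)
    {G : E} (hg : HasGradientAt g G x) : g y - g x ≤ ⟪G, y - x⟫ := by
  have hline : HasDerivAt (fun t : ℝ => x + t • (y - x)) (y - x) 0 := by
    simpa using ((hasDerivAt_id (0:ℝ)).smul_const (y - x)).const_add x
  have hφ : HasDerivAt (fun t : ℝ => g (x + t • (y - x))) ⟪G, y - x⟫ 0 := by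
    have hx0 : HasFDerivAt g ((InnerProductSpace.toDual ℝ E) G) ((fun t : ℝ => x + t • (y - x)) 0) := by
      simpa using hg.hasFDerivAt
    have hc0 := hx0.comp_hasDerivAt 0 hline
    simp at hc0
    exact hc0
  have hslope := hasDerivAt_iff_tendsto_slope.mp hφ
  have hslope' : Filter.Tendsto (slope (fun t : ℝ => g (x + t • (y - x))) 0)
      (nhdsWithin 0 (Set.Ioi 0)) (nhds ⟪G, y - x⟫) :=
    hslope.mono_left (nhdsWithin_mono _ (fun t ht => ne_of_gt ht))
  refine ge_of_tendsto hslope' ?_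
  filter_upwards [Ioc_mem_nhdsGT_of_mem (Set.mem_Ico.mpr ⟨le_refl (0:ℝ), one_pos⟩)] with t ht
  obtain ⟨ht0, ht1⟩ := ht
  have hcomb : (1 - t) * g x + t * g y ≤ g ((1 - t) • x + t • y) := by
    simpa [smul_eq_mul] using hc.2 hx hy (show (0:ℝ) ≤ 1 - t by linarith) ht0.le (by ring)
  have hpt : x + t • (y - x) = (1 - t) • x + t • y := by
    simp [smul_sub, sub_smul]; abel
  have : (1 - t) * g x + t * g y ≤ g (x + t • (y - x)) := by rw [hpt]; exact hcomb
  have hsl : slope (fun t : ℝ => g (x + t • (y - x))) 0 t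
      = (g (x + t • (y - x)) - g x) / t := by
    simp [slope_def_field]
  rw [hsl, le_div_iff₀ ht0]
  nlinarith


/-- The probability simplex in `ℝ^L` (as a subset of Euclidean space). -/
def simplex (L : ℕ) : Set (EuclideanSpace ℝ (Fin L)) :=
  {π | (∀ i, 0 ≤ π i) ∧ ∑ i, π i = 1}

/-- **Gap bound at a maximizer of a shifted parameter** (used in the convergence proof):
`⟨∇_π f(θ_k, π_k), π*(θ_s) − π_k⟩ ≥ f(θ_k, π*(θ_k)) − f(θ_k, π_k) − 2l‖θ_s − θ_k‖`. -/
theorem gap_bound_shifted_maximizer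
    {d L : ℕ}
    (f : EuclideanSpace ℝ (Fin d) → EuclideanSpace ℝ (Fin L) → ℝ)
    (l : ℝ) (hl : 0 ≤ l)
    (hconc : ∀ θ, ConcaveOn ℝ (simplex L) (f θ))
    (U : Set (EuclideanSpace ℝ (Fin L))) (hUopen : IsOpen U) (hUsub : simplex L ⊆ U)
    (hdiff : ∀ θ, DifferentiableOn ℝ (f θ) U)
    (hlip : ∀ π ∈ simplex L, ∀ θ θ', |f θ π - f θ' π| ≤ l * ‖θ - θ'‖)
    (πstar : EuclideanSpace ℝ (Fin d) → EuclideanSpace ℝ (Fin L))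
    (hπstar : ∀ θ, πstar θ ∈ simplex L ∧ ∀ π ∈ simplex L, f θ π ≤ f θ (πstar θ)) :
    ∀ (θk θs : EuclideanSpace ℝ (Fin d)), ∀ πk ∈ simplex L,
      f θk (πstar θk) - f θk πk - 2 * l * ‖θs - θk‖
        ≤ ⟪gradient (f θk) πk, πstar θs - πk⟫ := by
  intro θk θs πk hπk
  have hks := (hπstar θk).1
  have hss := (hπstar θs).1
  have hgrad : HasGradientAt (f θk) (gradient (f θk) πk) πk :=
    (((hdiff θk) πk (hUsub hπk)).differentiableAt (hUopen.mem_nhds (hUsub hπk))).hasGradientAt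
  have key := concave_grad_ineq (hconc θk) hπk hss hgrad
  have h1 : f θs (πstar θs) - f θk (πstar θs) ≤ l * ‖θs - θk‖ := by
    have := hlip (πstar θs) hss θs θk
    exact (abs_le.mp this).2
  have h2 : f θs (πstar θk) ≤ f θs (πstar θs) := (hπstar θs).2 _ hks
  have h3 : f θk (πstar θk) - f θs (πstar θk) ≤ l * ‖θk - θs‖ := by
    have := hlip (πstar θk) hks θk θs
    exact (abs_le.mp this).2
  have hnorm : ‖θk - θs‖ = ‖θs - θk‖ := norm_sub_rev _ _
  rw [hnorm] at h3
  have h2l : 2 * l * ‖θs - θk‖ = l * ‖θs - θk‖ + l * ‖θs - θk‖ := by ring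
  linarith

end
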